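/- Suppose a decoder Δ : ℝ^m → ℝ^n satisfies ‖x - Δ(Ax + ε)‖₂ ≤ C₀ l^{-t} σ_{l,G}(x) + C₁ε_max + δ for all x ∈ ℝ^n and all ε with ‖ε‖₂ ≤ ε_max. Then for every η with ‖Aη‖₂ ≤ ε_max, we have ‖η‖₂ ≤ C₀ l^{-t} σ_{2l,G'}(η) + 2C₁ε_max + 2δ. -/

import Mathlib

noncomputable section

/-- The ℓ₂ norm of a vector in ℝⁿ. -/
def l2 {n : ℕ} (x : Fin n → ℝ) : ℝ := Real.sqrt (∑ i, (x i) ^ 2)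

/-- The ℓ₁ norm of a vector in ℝⁿ. -/
def l1 {n : ℕ} (x : Fin n → ℝ) : ℝ := ∑ i, |x i|

/-- The ℓ₀ "norm": number of nonzero coordinates. -/
def l0 {n : ℕ} (x : Fin n → ℝ) : ℕ := (Finset.univ.filter fun i => x i ≠ 0).card

/-- S_{l,G}. -/
def SlG {n k : ℕ} (G : (Fin k → ℝ) → (Fin n → ℝ)) (l : ℕ) : Set (Fin n → ℝ) :=
  {w | ∃ z : Fin k → ℝ, l0 (w - G z) ≤ l}

/-- S_{2l,G'} where G'(z₀,z₁) = G z₀ - G z₁. -/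
def SlG' {n k : ℕ} (G : (Fin k → ℝ) → (Fin n → ℝ)) (l : ℕ) : Set (Fin n → ℝ) :=
  {w | ∃ z₀ z₁ : Fin k → ℝ, l0 (w - (G z₀ - G z₁)) ≤ 2 * l}

/-- σ_T(x) = inf_{xh ∈ T} ‖x - xh‖₁. -/
def sigma' {n : ℕ} (T : Set (Fin n → ℝ)) (x : Fin n → ℝ) : ℝ :=
  sInf {d : ℝ | ∃ xh ∈ T, d = l1 (x - xh)}

lemma l2_eq_norm {n : ℕ} (x : Fin n → ℝ) :
    l2 x = ‖(WithLp.equiv 2 (Fin n → ℝ)).symm x‖ := by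
  rw [EuclideanSpace.norm_eq]
  simp [l2, Real.norm_eq_abs, sq_abs]

lemma l2_sub_le {n : ℕ} (a b c : Fin n → ℝ) :
    l2 (a - c) ≤ l2 (a - b) + l2 (b - c) := by
  simp only [l2_eq_norm]
  have : (WithLp.equiv 2 (Fin n → ℝ)).symm (a - c) =
      (WithLp.equiv 2 (Fin n → ℝ)).symm (a - b) + (WithLp.equiv 2 (Fin n → ℝ)).symm (b - c) := by
    simp [WithLp.toLp_sub, WithLp.toLp_add]
  rw [this]
  exact norm_add_le _ _

lemma l2_sub_comm {n : ℕ} (a b : Fin n → ℝ) : l2 (a - b) = l2 (b - a) := by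
  unfold l2; congr 1; apply Finset.sum_congr rfl; intro i _
  simp only [Pi.sub_apply]; ring

lemma l1_nonneg {n : ℕ} (x : Fin n → ℝ) : 0 ≤ l1 x :=
  Finset.sum_nonneg fun i _ => abs_nonneg _

lemma l2_zero {n : ℕ} : l2 (0 : Fin n → ℝ) = 0 := by simp [l2]

lemma l2_neg {n : ℕ} (x : Fin n → ℝ) : l2 (-x) = l2 x := by simp [l2]

lemma l0_split {n l : ℕ} (w : Fin n → ℝ) (h : l0 w ≤ 2 * l) :
    ∃ ν₀ ν₁ : Fin n → ℝ, w = ν₀ + ν₁ ∧ l0 ν₀ ≤ l ∧ l0 ν₁ ≤ l := by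
  set S := Finset.univ.filter (fun i => w i ≠ 0) with hS
  obtain ⟨T, hTs, hTcard⟩ := S.exists_subset_card_eq (n := min l S.card) (min_le_right _ _)
  refine ⟨fun i => if i ∈ T then w i else 0, fun i => if i ∈ T then 0 else w i, ?_, ?_, ?_⟩
  · funext i; by_cases hi : i ∈ T <;> simp [hi]
  · apply le_trans (Finset.card_le_card (s := _) (t := T) ?_)
    · rw [hTcard]; exact min_le_left _ _
    · intro i hi
      simp only [Finset.mem_filter, Finset.mem_univ, true_and] at hi
      by_contra hiT; simp [hiT] at hi
  · apply le_trans (Finset.card_le_card (s := _) (t := S \ T) ?_)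
    · have := Finset.card_sdiff_of_subset hTs
      have hSc : S.card ≤ 2 * l := h
      omega
    · intro i hi
      simp only [Finset.mem_filter, Finset.mem_univ, true_and] at hi
      by_cases hiT : i ∈ T
      · simp [hiT] at hi
      · simp [hiT] at hi
        simp [Finset.mem_sdiff, hS, hi, hiT]

lemma sigma'_nonneg {n : ℕ} (T : Set (Fin n → ℝ)) (x : Fin n → ℝ) :
    0 ≤ sigma' T x :=
  Real.sInf_nonneg (by rintro d ⟨xh, _, rfl⟩; exact l1_nonneg _)

lemma sigma'_le {n : ℕ} {T : Set (Fin n → ℝ)} {x xh : Fin n → ℝ} (h : xh ∈ T) :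
    sigma' T x ≤ l1 (x - xh) := by
  apply csInf_le ⟨0, by rintro d ⟨w, _, rfl⟩; exact l1_nonneg _⟩
  exact ⟨xh, h, rfl⟩

/-- Necessity: any decoder with the mixed-norm guarantee forces the null-space
    property ‖η‖₂ ≤ C₀ l^{-t} σ_{2l,G'}(η) + 2C₁ε_max + 2δ on T_A(ε_max). -/
theorem stmt9 {m n k : ℕ} (A : Matrix (Fin m) (Fin n) ℝ)
    (G : (Fin k → ℝ) → (Fin n → ℝ)) (l : ℕ) (C₀ C₁ δ t εmax : ℝ)
    (hC₀ : 0 ≤ C₀) (hC₁ : 0 ≤ C₁) (hδ : 0 ≤ δ) (ht : 0 ≤ t) (hε : 0 ≤ εmax)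
    (Δ : (Fin m → ℝ) → (Fin n → ℝ))
    (hΔ : ∀ (x : Fin n → ℝ) (ε : Fin m → ℝ), l2 ε ≤ εmax →
      l2 (x - Δ (A.mulVec x + ε)) ≤
        C₀ * (l : ℝ) ^ (-t) * sigma' (SlG G l) x + C₁ * εmax + δ) :
    ∀ η : Fin n → ℝ, l2 (A.mulVec η) ≤ εmax →
      l2 η ≤ C₀ * (l : ℝ) ^ (-t) * sigma' (SlG' G l) η + 2 * C₁ * εmax + 2 * δ := by
  intro η hη
  set C : ℝ := C₀ * (l : ℝ) ^ (-t) with hCdef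
  have hC : 0 ≤ C := mul_nonneg hC₀ (Real.rpow_nonneg (Nat.cast_nonneg l) _)
  refine le_of_forall_pos_le_add fun ε'' hε'' => ?_
  -- pick a near-minimizer
  have hne : {d : ℝ | ∃ xh ∈ SlG' G l, d = l1 (η - xh)}.Nonempty :=
    ⟨l1 (η - (G 0 - G 0)), G 0 - G 0, ⟨0, 0, by simp [l0]⟩, rfl⟩
  have hpos : (0 : ℝ) < ε'' / (C + 1) := div_pos hε'' (by linarith)
  have hlt : sigma' (SlG' G l) η < sigma' (SlG' G l) η + ε'' / (C + 1) :=
    lt_add_of_pos_right _ hpos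
  obtain ⟨d, ⟨xh, ⟨z₀, z₁, hsp⟩, rfl⟩, hd⟩ := exists_lt_of_csInf_lt hne hlt
  obtain ⟨ν₀, ν₁, hsum, h0, h1⟩ := l0_split _ hsp
  have hxh : xh = G z₀ - G z₁ + (ν₀ + ν₁) := by rw [← hsum]; abel
  set v : Fin n → ℝ := G z₁ - ν₁ with hv
  set x₁ : Fin n → ℝ := η + v with hx₁
  set y : Fin m → ℝ := A.mulVec v with hy
  -- decoder applied to v with zero noise
  have H1 : l2 (v - Δ y) ≤ C * sigma' (SlG G l) v + C₁ * εmax + δ := by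
    have := hΔ v 0 (by rw [l2_zero]; exact hε)
    simpa using this
  -- decoder applied to x₁ with noise A v - A x₁ = -A η
  have hεnorm : l2 (A.mulVec v - A.mulVec x₁) ≤ εmax := by
    have h1 : A.mulVec v - A.mulVec x₁ = -(A.mulVec η) := by
      rw [hx₁, Matrix.mulVec_add]; abel
    rw [h1, l2_neg]; exact hη
  have H2 : l2 (x₁ - Δ y) ≤ C * sigma' (SlG G l) x₁ + C₁ * εmax + δ := by
    have := hΔ x₁ (A.mulVec v - A.mulVec x₁) hεnorm
    rwa [add_sub_cancel] at this
  -- σ(v) = 0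
  have hσv : sigma' (SlG G l) v = 0 := by
    refine le_antisymm ?_ (sigma'_nonneg _ _)
    have hmem : v ∈ SlG G l := ⟨z₁, by
      have : v - G z₁ = -ν₁ := by rw [hv]; abel
      rw [this]; simpa [l0] using h1⟩
    have := sigma'_le (x := v) hmem
    simpa [l1] using this
  -- σ(x₁) ≤ d
  have hσx₁ : sigma' (SlG G l) x₁ ≤ l1 (η - xh) := by
    have hmem : (G z₀ + ν₀) ∈ SlG G l := ⟨z₀, by
      have : G z₀ + ν₀ - G z₀ = ν₀ := by abel
      rw [this]; exact h0⟩
    have heq : x₁ - (G z₀ + ν₀) = η - xh := by rw [hx₁, hv, hxh]; abel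
    have := sigma'_le (x := x₁) hmem
    rwa [heq] at this
  -- triangle inequality
  have htri : l2 η ≤ l2 (x₁ - Δ y) + l2 (v - Δ y) := by
    have : η = x₁ - v := by rw [hx₁]; abel
    rw [this]
    calc l2 (x₁ - v) ≤ l2 (x₁ - Δ y) + l2 (Δ y - v) := l2_sub_le _ _ _
    _ = l2 (x₁ - Δ y) + l2 (v - Δ y) := by rw [l2_sub_comm (Δ y) v]
  -- assemble
  have hCd : C * l1 (η - xh) ≤ C * sigma' (SlG' G l) η + ε'' := by
    have h2 : C * l1 (η - xh) ≤ C * (sigma' (SlG' G l) η + ε'' / (C + 1)) :=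
      mul_le_mul_of_nonneg_left (le_of_lt hd) hC
    have h3 : C * (ε'' / (C + 1)) ≤ ε'' := by
      rw [mul_div_assoc'] at *
      rw [div_le_iff₀ (by linarith)]
      nlinarith
    nlinarith
  have := hσx₁
  have hCx₁ : C * sigma' (SlG G l) x₁ ≤ C * l1 (η - xh) :=
    mul_le_mul_of_nonneg_left hσx₁ hC
  rw [hσv] at H1
  linarith [H1, H2, htri, hCd, hCx₁]
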